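/- Let H be a finite simple graph with vertex set {1,…,N} and let C be a set of l ≥ 1 distinct edges of H. If C is not an l-star and C is not a triangle, then cost(C) ≥ l − 1/2. -/

import Mathlib

open SimpleGraph Finset

/-- For a graph on vertex set `Fin N`, the edge `e = {i, j}` is identified with the
point `x_e = b_i + b_j` in `ℝ^N`, where `b_i` is the `i`-th standard basis vector. -/
noncomputable def edgePoint (N : ℕ) (e : Sym2 (Fin N)) : EuclideanSpace ℝ (Fin N) :=
  Sym2.lift ⟨fun i j => EuclideanSpace.single i (1 : ℝ) + EuclideanSpace.single j (1 : ℝ),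
    fun _ _ => add_comm _ _⟩ e

/-- The (k-means) cost of a finite set `C` of edges:
`cost(C) = inf_{c ∈ ℝ^N} Σ_{e ∈ C} ‖x_e − c‖²`. -/
noncomputable def cost (N : ℕ) (C : Finset (Sym2 (Fin N))) : ℝ :=
  ⨅ c : EuclideanSpace ℝ (Fin N), ∑ e ∈ C, ‖edgePoint N e - c‖ ^ 2

/-- A star is a set of distinct edges all incident to a common vertex. -/
def IsStar {N : ℕ} (C : Finset (Sym2 (Fin N))) : Prop :=
  ∃ v : Fin N, ∀ e ∈ C, v ∈ e

/-- A triangle is the set of the three edges `{u,v}, {v,w}, {u,w}` on three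
distinct vertices `u, v, w`. -/
def IsTriangle {N : ℕ} (C : Finset (Sym2 (Fin N))) : Prop :=
  ∃ u v w : Fin N, u ≠ v ∧ u ≠ w ∧ v ≠ w ∧ C = {s(u, v), s(v, w), s(u, w)}

def Meets {N : ℕ} (e f : Sym2 (Fin N)) : Prop := ∃ v, v ∈ e ∧ v ∈ f

lemma meets_self {N : ℕ} (e : Sym2 (Fin N)) : Meets e e := by
  induction e using Sym2.inductionOn with | hf i j => exact ⟨i, by simp, by simp⟩

lemma sym2_ex {α : Type*} (e : Sym2 α) : ∃ a b, e = s(a, b) := by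
  induction e using Sym2.inductionOn with | hf a b => exact ⟨a, b, rfl⟩

lemma cherry {N : ℕ} {e f : Sym2 (Fin N)} (hd : ¬ e.IsDiag) (hd' : ¬ f.IsDiag)
    (hne : e ≠ f) (hm : Meets e f) :
    ∃ v a b : Fin N, a ≠ v ∧ b ≠ v ∧ a ≠ b ∧ e = s(v, a) ∧ f = s(v, b) := by
  obtain ⟨w, hw1, hw2⟩ := hm
  obtain ⟨a, rfl⟩ := Sym2.mem_iff_exists.mp hw1
  obtain ⟨b, rfl⟩ := Sym2.mem_iff_exists.mp hw2
  rw [Sym2.mk_isDiag_iff] at hd hd'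
  refine ⟨w, a, b, fun h => hd h.symm, fun h => hd' h.symm, ?_, rfl, rfl⟩
  rintro rfl; exact hne rfl

lemma pigeon {N : ℕ} {h : Sym2 (Fin N)} {a b c : Fin N}
    (ha : a ∈ h) (hb : b ∈ h) (hc : c ∈ h) (hab : a ≠ b) (hac : a ≠ c) (hbc : b ≠ c) :
    False := by
  induction h using Sym2.inductionOn with | hf p q =>
  rw [Sym2.mem_iff] at ha hb hc
  rcases ha with rfl | rfl <;> rcases hb with rfl | rfl <;> rcases hc with rfl | rfl <;>
    simp_all

lemma not_star_exists {N : ℕ} {C : Finset (Sym2 (Fin N))} (hstar : ¬ IsStar C)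
    (v : Fin N) : ∃ h ∈ C, v ∉ h := by
  by_contra hx; push_neg at hx; exact hstar ⟨v, hx⟩

lemma mem_of_full {N : ℕ} {C : Finset (Sym2 (Fin N))} {e h : Sym2 (Fin N)} {v w : Fin N}
    (hfull : ∀ f ∈ C, Meets e f) (hh : h ∈ C) (he : e = s(v, w)) (hv : v ∉ h) :
    w ∈ h := by
  obtain ⟨x, hx1, hx2⟩ := hfull _ hh
  rw [he, Sym2.mem_iff] at hx1
  rcases hx1 with rfl | rfl
  · exact absurd hx2 hv
  · exact hx2

set_option maxHeartbeats 2000000 in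
lemma no_three_full {N : ℕ} {C : Finset (Sym2 (Fin N))}
    (hdiag : ∀ e ∈ C, ¬ e.IsDiag) (hstar : ¬ IsStar C) (htri : ¬ IsTriangle C)
    {f1 f2 f3 : Sym2 (Fin N)} (h1 : f1 ∈ C) (h2 : f2 ∈ C) (h3 : f3 ∈ C)
    (h12 : f1 ≠ f2) (h13 : f1 ≠ f3) (h23 : f2 ≠ f3)
    (hf1 : ∀ f ∈ C, Meets f1 f) (hf2 : ∀ f ∈ C, Meets f2 f)
    (hf3 : ∀ f ∈ C, Meets f3 f) : False := by
  obtain ⟨v, a, b, hav, hbv, hab, rfl, rfl⟩ :=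
    cherry (hdiag _ h1) (hdiag _ h2) h12 (hf1 _ h2)
  by_cases hv : v ∈ f3
  · obtain ⟨c, rfl⟩ := Sym2.mem_iff_exists.mp hv
    have hca : c ≠ a := by rintro rfl; exact h13 rfl
    have hcb : c ≠ b := by rintro rfl; exact h23 rfl
    obtain ⟨h, hh, hvh⟩ := not_star_exists hstar v
    have hah : a ∈ h := mem_of_full hf1 hh rfl hvh
    have hbh : b ∈ h := mem_of_full hf2 hh rfl hvh
    have hch : c ∈ h := mem_of_full hf3 hh rfl hvh
    exact pigeon hah hbh hch hab (Ne.symm hca) (Ne.symm hcb)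
  · -- v ∉ f3, so f3 = s(a, b)
    have haf3 : a ∈ f3 := by
      obtain ⟨x, hx1, hx2⟩ := hf3 _ h1
      rw [Sym2.mem_iff] at hx2
      rcases hx2 with rfl | rfl
      · exact absurd hx1 hv
      · exact hx1
    have hbf3 : b ∈ f3 := by
      obtain ⟨x, hx1, hx2⟩ := hf3 _ h2
      rw [Sym2.mem_iff] at hx2
      rcases hx2 with rfl | rfl
      · exact absurd hx1 hv
      · exact hx1
    obtain ⟨c, rfl⟩ := Sym2.mem_iff_exists.mp haf3
    rw [Sym2.mem_iff] at hbf3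
    rcases hbf3 with rfl | rfl
    · exact hab rfl
    -- now f3 = s(a, b)  (c := b)
    have hmem : ∀ h ∈ C, h = s(v, a) ∨ h = s(v, b) ∨ h = s(a, b) := by
      intro h hh
      obtain ⟨p, q, rfl⟩ := sym2_ex h
      obtain ⟨w1, hw1, hw1'⟩ := hf1 _ hh
      obtain ⟨w2, hw2, hw2'⟩ := hf2 _ hh
      obtain ⟨w3, hw3, hw3'⟩ := hf3 _ hh
      simp only [Sym2.mem_iff] at hw1 hw1' hw2 hw2' hw3 hw3'
      simp only [Sym2.eq_iff]
      rcases hw1 with rfl | rfl <;> rcases hw2 with rfl | rfl <;>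
        rcases hw3 with rfl | rfl <;> rcases hw1' with h1' | h1' <;>
        rcases hw2' with h2' | h2' <;> rcases hw3' with h3' | h3' <;>
        subst_vars <;> tauto
    have hCeq : C = {s(v, a), s(v, b), s(a, b)} := by
      apply Finset.Subset.antisymm
      · intro h hh
        rcases hmem h hh with rfl | rfl | rfl <;> simp
      · intro h hh
        simp only [Finset.mem_insert, Finset.mem_singleton] at hh
        rcases hh with rfl | rfl | rfl
        · exact h1
        · exact h2
        · exact h3
    exact htri ⟨v, a, b, Ne.symm hav, Ne.symm hbv, hab, by
      rw [hCeq, Finset.pair_comm s(v, b) s(a, b)]⟩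

lemma two_le_card {N : ℕ} {C : Finset (Sym2 (Fin N))} (hstar : ¬ IsStar C)
    (h1 : 1 ≤ C.card) : 2 ≤ C.card := by
  by_contra h
  push_neg at h
  have : C.card = 1 := by omega
  obtain ⟨e, rfl⟩ := Finset.card_eq_one.mp this
  obtain ⟨a, b, rfl⟩ := sym2_ex e
  exact hstar ⟨a, by simp⟩

lemma four_le_card {N : ℕ} {C : Finset (Sym2 (Fin N))}
    (hdiag : ∀ e ∈ C, ¬ e.IsDiag) (hstar : ¬ IsStar C) (htri : ¬ IsTriangle C)
    {f1 f2 : Sym2 (Fin N)} (h1 : f1 ∈ C) (h2 : f2 ∈ C) (h12 : f1 ≠ f2)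
    (hf1 : ∀ f ∈ C, Meets f1 f) (hf2 : ∀ f ∈ C, Meets f2 f) : 4 ≤ C.card := by
  obtain ⟨v, a, b, hav, hbv, hab, rfl, rfl⟩ :=
    cherry (hdiag _ h1) (hdiag _ h2) h12 (hf1 _ h2)
  obtain ⟨h, hh, hvh⟩ := not_star_exists hstar v
  have hah : a ∈ h := mem_of_full hf1 hh rfl hvh
  have hbh : b ∈ h := mem_of_full hf2 hh rfl hvh
  have hhab : h = s(a, b) := by
    obtain ⟨c, rfl⟩ := Sym2.mem_iff_exists.mp hah
    rw [Sym2.mem_iff] at hbh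
    rcases hbh with rfl | rfl
    · exact absurd rfl hab
    · rfl
  subst hhab
  have hne1 : s(v, a) ≠ s(v, b) := by simp [Sym2.eq_iff]; tauto
  have hne2 : s(v, a) ≠ s(a, b) := by simp [Sym2.eq_iff]; tauto
  have hne3 : s(v, b) ≠ s(a, b) := by simp [Sym2.eq_iff]; tauto
  have hsub : ({s(v, a), s(v, b), s(a, b)} : Finset (Sym2 (Fin N))) ⊆ C := by
    intro x hx
    simp only [Finset.mem_insert, Finset.mem_singleton] at hx
    rcases hx with rfl | rfl | rfl
    · exact h1
    · exact h2
    · exact hh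
  have hcard3 : ({s(v, a), s(v, b), s(a, b)} : Finset (Sym2 (Fin N))).card = 3 := by
    rw [Finset.card_insert_of_notMem (by simp [hne1, hne2]),
      Finset.card_insert_of_notMem (by simp [hne3]), Finset.card_singleton]
  by_contra hx
  push_neg at hx
  have hle : C.card ≤ ({s(v, a), s(v, b), s(a, b)} : Finset (Sym2 (Fin N))).card := by omega
  have hCeq := Finset.eq_of_subset_of_card_le hsub hle
  exact htri ⟨v, a, b, Ne.symm hav, Ne.symm hbv, hab, by
    rw [← hCeq, Finset.pair_comm s(v, b) s(a, b)]⟩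

open Classical in
lemma full_bound {N : ℕ} (C : Finset (Sym2 (Fin N)))
    (hdiag : ∀ e ∈ C, ¬ e.IsDiag) (hstar : ¬ IsStar C) (htri : ¬ IsTriangle C)
    (h1 : 1 ≤ C.card) :
    2 * (C.filter fun e => ∀ f ∈ C, Meets e f).card ≤ C.card := by
  classical
  have hl2 := two_le_card hstar h1
  set F := C.filter fun e => ∀ f ∈ C, Meets e f with hF
  have hFk : F.card ≤ 2 := by
    by_contra hx
    push_neg at hx
    obtain ⟨f1, f2, f3, m1, m2, m3, h12, h13, h23⟩ := Finset.two_lt_card_iff.mp hx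
    rw [hF, Finset.mem_filter] at m1 m2 m3
    exact no_three_full hdiag hstar htri m1.1 m2.1 m3.1 h12 h13 h23 m1.2 m2.2 m3.2
  rcases Nat.lt_or_ge F.card 2 with h | h
  · omega
  · have hk2 : F.card = 2 := le_antisymm hFk h
    obtain ⟨f1, f2, h12, hFeq⟩ := Finset.card_eq_two.mp hk2
    have m1 : f1 ∈ F := by rw [hFeq]; simp
    have m2 : f2 ∈ F := by rw [hFeq]; simp
    rw [hF, Finset.mem_filter] at m1 m2
    have := four_le_card hdiag hstar htri m1.1 m2.1 h12 m1.2 m2.2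
    omega

lemma edgePoint_mk (N : ℕ) (i j : Fin N) :
    edgePoint N s(i,j) = EuclideanSpace.single i (1:ℝ) + EuclideanSpace.single j 1 := by
  simp [edgePoint]

lemma inner_single_single (N : ℕ) (i k : Fin N) :
    (inner ℝ (EuclideanSpace.single i (1:ℝ)) (EuclideanSpace.single k (1:ℝ)) : ℝ)
      = if i = k then 1 else 0 := by
  rw [EuclideanSpace.inner_single_left, EuclideanSpace.single_apply]
  simp [eq_comm]

lemma inner_edgePoint (N : ℕ) (i j k m : Fin N) :
    (inner ℝ (edgePoint N s(i,j)) (edgePoint N s(k,m)) : ℝ) =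
      ((if i = k then 1 else 0) + (if i = m then 1 else 0))
      + ((if j = k then 1 else 0) + (if j = m then 1 else 0)) := by
  rw [edgePoint_mk, edgePoint_mk, inner_add_left, inner_add_right, inner_add_right,
    inner_single_single, inner_single_single, inner_single_single, inner_single_single]

lemma inner_edgePoint_nonneg (N : ℕ) (e f : Sym2 (Fin N)) :
    0 ≤ (inner ℝ (edgePoint N e) (edgePoint N f) : ℝ) := by
  induction e using Sym2.inductionOn with | hf i j =>
  induction f using Sym2.inductionOn with | hf k m =>
  rw [inner_edgePoint]
  split_ifs <;> norm_num

lemma inner_edgePoint_self (N : ℕ) (e : Sym2 (Fin N)) (he : ¬ e.IsDiag) :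
    (inner ℝ (edgePoint N e) (edgePoint N e) : ℝ) = 2 := by
  induction e using Sym2.inductionOn with | hf i j =>
  rw [Sym2.mk_isDiag_iff] at he
  rw [inner_edgePoint]
  simp [he, Ne.symm he]
  norm_num

lemma inner_edgePoint_le_one (N : ℕ) (e f : Sym2 (Fin N)) (he : ¬ e.IsDiag)
    (hf : ¬ f.IsDiag) (hne : e ≠ f) :
    (inner ℝ (edgePoint N e) (edgePoint N f) : ℝ) ≤ 1 := by
  induction e using Sym2.inductionOn with | hf i j =>
  induction f using Sym2.inductionOn with | hf k m =>
  rw [Sym2.mk_isDiag_iff] at he hf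
  rw [ne_eq, Sym2.eq_iff] at hne
  push_neg at hne
  rw [inner_edgePoint]
  split_ifs <;> simp_all

lemma inner_edgePoint_eq_zero (N : ℕ) (e f : Sym2 (Fin N)) (h : ¬ Meets e f) :
    (inner ℝ (edgePoint N e) (edgePoint N f) : ℝ) = 0 := by
  induction e using Sym2.inductionOn with | hf i j =>
  induction f using Sym2.inductionOn with | hf k m =>
  simp only [Meets, not_exists, Sym2.mem_iff, not_and] at h
  have h1 := h i; have h2 := h j
  simp only [true_or, or_true, forall_true_left] at h1 h2
  push_neg at h1 h2
  rw [inner_edgePoint]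
  simp [h1.1, h1.2, h2.1, h2.2]

-- the analytic main step, assuming the combinatorial bound
open Classical in
theorem main_ineq {N : ℕ} (C : Finset (Sym2 (Fin N)))
    (hdiag : ∀ e ∈ C, ¬ e.IsDiag) (hl1 : 1 ≤ C.card)
    (hfull : 2 * (C.filter fun e => ∀ f ∈ C, Meets e f).card ≤ C.card) :
    (C.card : ℝ) - 1 / 2 ≤ cost N C := by
  classical
  set L : ℝ := (C.card : ℝ) with hL
  have hLpos : (0:ℝ) < L := by
    rw [hL]; exact_mod_cast Nat.lt_of_lt_of_le Nat.zero_lt_one hl1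
  rw [cost]
  apply le_ciInf
  intro c
  set s : EuclideanSpace ℝ (Fin N) := ∑ e ∈ C, edgePoint N e with hs
  set K : ℝ := ((C.filter fun e => ∀ f ∈ C, Meets e f).card : ℝ) with hKdef
  have hK : 2 * K ≤ L := by rw [hKdef, hL]; exact_mod_cast hfull
  have hK0 : 0 ≤ K := by positivity
  -- expansion of the sum
  have expand : ∑ e ∈ C, ‖edgePoint N e - c‖ ^ 2
      = 2 * L - 2 * (inner ℝ s c : ℝ) + L * ‖c‖ ^ 2 := by
    have : ∀ e ∈ C, ‖edgePoint N e - c‖ ^ 2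
        = 2 - 2 * (inner ℝ (edgePoint N e) c : ℝ) + ‖c‖ ^ 2 := by
      intro e he
      have h2 : ‖edgePoint N e‖ ^ 2 = 2 := by
        rw [← real_inner_self_eq_norm_sq, inner_edgePoint_self N e (hdiag e he)]
      rw [@norm_sub_sq_real, h2]
    rw [Finset.sum_congr rfl this]
    rw [Finset.sum_add_distrib, Finset.sum_sub_distrib, Finset.sum_const, Finset.sum_const,
      ← Finset.mul_sum, ← sum_inner]
    simp only [nsmul_eq_mul, ← hs, ← hL]
    ring
  -- bound on ‖s‖²
  have hs2 : (inner ℝ s s : ℝ) ≤ L ^ 2 + K := by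
    have hinner : (inner ℝ s s : ℝ) = ∑ e ∈ C, ∑ f ∈ C, (inner ℝ (edgePoint N e) (edgePoint N f) : ℝ) := by
      rw [hs, sum_inner]
      exact Finset.sum_congr rfl fun e _ => inner_sum _ _ _
    rw [hinner]
    have hrow : ∀ e ∈ C, ∑ f ∈ C, (inner ℝ (edgePoint N e) (edgePoint N f) : ℝ)
        ≤ L + (if (∀ f ∈ C, Meets e f) then 1 else 0) := by
      intro e he
      rw [← Finset.sum_erase_add _ _ he, inner_edgePoint_self N e (hdiag e he)]
      by_cases hfull_e : ∀ f ∈ C, Meets e f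
      · rw [if_pos hfull_e]
        have hb := Finset.sum_le_card_nsmul (C.erase e)
          (fun f => (inner ℝ (edgePoint N e) (edgePoint N f) : ℝ)) 1
          (fun f hf => inner_edgePoint_le_one N e f (hdiag e he)
            (hdiag f (Finset.mem_of_mem_erase hf)) (Ne.symm (Finset.ne_of_mem_erase hf)))
        rw [nsmul_eq_mul, mul_one] at hb
        have hc : ((C.erase e).card : ℝ) = L - 1 := by
          rw [Finset.card_erase_of_mem he, hL]
          have : 1 ≤ C.card := hl1
          push_cast [Nat.cast_sub this]
          ring
        rw [hc] at hb
        linarith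
      · rw [if_neg hfull_e]
        push_neg at hfull_e
        obtain ⟨f0, hf0, hmf0⟩ := hfull_e
        have hne : f0 ≠ e := fun h => hmf0 (h ▸ meets_self e)
        have hf0' : f0 ∈ C.erase e := Finset.mem_erase.mpr ⟨hne, hf0⟩
        rw [← Finset.sum_erase_add _ _ hf0', inner_edgePoint_eq_zero N e f0 hmf0]
        have hb := Finset.sum_le_card_nsmul ((C.erase e).erase f0)
          (fun f => (inner ℝ (edgePoint N e) (edgePoint N f) : ℝ)) 1
          (fun f hf => inner_edgePoint_le_one N e f (hdiag e he)
            (hdiag f (Finset.mem_of_mem_erase (Finset.mem_of_mem_erase hf)))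
            (Ne.symm (Finset.ne_of_mem_erase (Finset.mem_of_mem_erase hf))))
        rw [nsmul_eq_mul, mul_one] at hb
        have h2card : 2 ≤ C.card := Finset.one_lt_card.mpr ⟨e, he, f0, hf0, Ne.symm hne⟩
        have hc : (((C.erase e).erase f0).card : ℝ) ≤ L - 2 := by
          rw [Finset.card_erase_of_mem hf0', Finset.card_erase_of_mem he, hL]
          push_cast [Nat.cast_sub (by omega : 1 ≤ C.card), Nat.cast_sub (by omega : 1 ≤ C.card - 1)]
          ring_nf
          norm_num
        linarith
    calc ∑ e ∈ C, ∑ f ∈ C, (inner ℝ (edgePoint N e) (edgePoint N f) : ℝ)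
        ≤ ∑ e ∈ C, (L + (if (∀ f ∈ C, Meets e f) then 1 else 0)) :=
          Finset.sum_le_sum hrow
      _ = L ^ 2 + K := by
          rw [Finset.sum_add_distrib, Finset.sum_const, Finset.sum_boole, nsmul_eq_mul]
          rw [hKdef, hL]
          ring
  -- positivity of the completed square
  have hsq : 0 ≤ L ^ 2 * ‖c‖ ^ 2 - 2 * L * (inner ℝ s c : ℝ) + (inner ℝ s s : ℝ) := by
    have hss : (inner ℝ s s : ℝ) = ‖s‖ ^ 2 := real_inner_self_eq_norm_sq s
    have hcs : (inner ℝ c s : ℝ) = (inner ℝ s c : ℝ) := real_inner_comm s c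
    have h0 : (0:ℝ) ≤ ‖L • c - s‖ ^ 2 := sq_nonneg _
    rw [@norm_sub_sq_real, norm_smul, real_inner_smul_left] at h0
    rw [Real.norm_eq_abs, abs_of_pos hLpos] at h0
    nlinarith [h0, hss, hcs]
  rw [expand]
  have key : L * (L - 1/2) ≤ L * (2 * L - 2 * (inner ℝ s c : ℝ) + L * ‖c‖ ^ 2) := by
    nlinarith [hsq, hs2, hK]
  have := (mul_le_mul_iff_right₀ hLpos).mp key
  linarith

/-- For a set `C` of `l ≥ 1` distinct edges of a finite simple graph `H`
on vertex set `{1, …, N}`, if `C` is neither an `l`-star nor a triangle, then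
`cost(C) ≥ l − 1/2`. -/
theorem statement8 {N : ℕ} (H : SimpleGraph (Fin N)) (C : Finset (Sym2 (Fin N)))
    (hC : ↑C ⊆ H.edgeSet) (l : ℕ) (hl : C.card = l) (hl1 : 1 ≤ l)
    (hstar : ¬ IsStar C) (htri : ¬ IsTriangle C) :
    (l : ℝ) - 1 / 2 ≤ cost N C := by
  classical
  have hdiag : ∀ e ∈ C, ¬ e.IsDiag := fun e he =>
    H.not_isDiag_of_mem_edgeSet (hC (Finset.mem_coe.mpr he))
  subst hl
  exact main_ineq C hdiag hl1 (full_bound C hdiag hstar htri hl1)
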